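/- Let G be an abelian group acting on a ranked poset P and let H be a subgroup of G. Then G/H acts on P/H, the iterated quotient (P/H)/(G/H) equals P/G, and if the action of G on P is translative then so is the induced action of G/H on P/H. -/
import Mathlib


/-- Let `G` be an abelian group acting (by order automorphisms) on a ranked
poset `P` and let `H ≤ G`. Then: (a) `G/H` acts on `P/H` (the action on `H`-orbits is
well defined on cosets and orbits); (b) the iterated quotient `(P/H)/(G/H)` equals `P/G`
(the orbit relations and order relations coincide); (c) if the `G`-action is translative,
then so is the induced `G/H`-action on `P/H`. -/
theorem abelian_subgroup_quotient_action
    {G P : Type*} [CommGroup G] [PartialOrder P] [OrderBot P] [MulAction G P]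
    (hact : ∀ (g : G) (x y : P), x ≤ y ↔ g • x ≤ g • y)
    (rk : P → ℕ)
    (hrk0 : rk ⊥ = 0)
    (hcov : ∀ x y : P, x ⋖ y → rk y = rk x + 1)
    (H : Subgroup G) :
    -- (a) the action of `G/H` on `P/H` is well defined
    (∀ (g g' : G) (p p' : P), g⁻¹ * g' ∈ H → (∃ h ∈ H, h • p = p') →
        ∃ h ∈ H, h • (g • p) = g' • p') ∧
    -- (b) `(P/H)/(G/H) = P/G`: orbits and order relations coincide
    (∀ p q : P, (∃ g : G, ∃ h ∈ H, h • (g • p) = q) ↔ ∃ g : G, g • p = q) ∧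
    (∀ p q : P, (∃ g : G, ∃ h ∈ H, h • (g • p) ≤ q) ↔ ∃ g : G, g • p ≤ q) ∧
    -- (c) translativity is inherited by the `G/H`-action on `P/H`
    ((∀ (p : P) (g : G), (∃ u : P, p ≤ u ∧ g • p ≤ u) → g • p = p) →
      ∀ (g : G) (p q : P), (∃ h ∈ H, h • p ≤ q) → (∃ h ∈ H, h • (g • p) ≤ q) →
        ∃ h ∈ H, h • (g • p) = p) := by
  refine ⟨?_, ?_, ?_, ?_⟩
  · rintro g g' p p' hgg' ⟨h, hh, rfl⟩
    refine ⟨g' * h * g⁻¹, ?_, ?_⟩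
    · have : g' * h * g⁻¹ = (g⁻¹ * g') * h := by
        rw [mul_assoc, mul_comm h g⁻¹, ← mul_assoc, mul_comm g' g⁻¹, mul_assoc]
      rw [this]; exact H.mul_mem hgg' hh
    · rw [smul_smul, smul_smul]; congr 1; rw [inv_mul_cancel_right]
  · intro p q
    constructor
    · rintro ⟨g, h, hh, rfl⟩; exact ⟨h * g, (smul_smul h g p).symm⟩
    · rintro ⟨g, rfl⟩; exact ⟨g, 1, H.one_mem, one_smul _ _⟩
  · intro p q
    constructor
    · rintro ⟨g, h, hh, hle⟩; exact ⟨h * g, by rwa [← smul_smul]⟩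
    · rintro ⟨g, hle⟩; exact ⟨g, 1, H.one_mem, by rwa [one_smul]⟩
  · rintro htr g p q ⟨h1, hh1, hle1⟩ ⟨h2, hh2, hle2⟩
    have key : (h1⁻¹ * h2 * g) • p = p := by
      apply htr
      refine ⟨h1⁻¹ • q, ?_, ?_⟩
      · rw [hact h1]; rwa [smul_inv_smul]
      · rw [hact h1, smul_inv_smul, smul_smul]
        have : h1 * (h1⁻¹ * h2 * g) = h2 * g := by group
        rw [this, ← smul_smul]; exact hle2
    refine ⟨h1⁻¹ * h2, H.mul_mem (H.inv_mem hh1) hh2, ?_⟩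
    rw [smul_smul]; exact key
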